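/- arXiv:math/0507109 — 3 statements merged into one kernel-verified Lean document; each statement's English description precedes it below -/
import Mathlib

section
/- Let H be a complex Hilbert space, A, W : H →L[ℂ] H self-adjoint continuous linear operators, f, E : ℝ → ℝ, ψ : ℝ → H, and s ∈ ℝ. Assume A(ψ t) + f(t)•W(ψ t) = E(t)•ψ(t) for all t, ‖ψ(t)‖ = 1 for all t, and that at s: f has derivative f', E has derivative E', and ψ has derivative v. Then E' = f' · Re⟪ψ(s), W(ψ s)⟫; that is, ∂_s E_q(s) = f'(s)⟨E_q(s)|W|E_q(s)⟩. -/
/-- The spectral flow of eigenvalues: `∂ₛE_q(s) = f'(s)⟨E_q(s)|W|E_q(s)⟩`. -/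
theorem stmt6 {H : Type*} [NormedAddCommGroup H] [InnerProductSpace ℂ H] [CompleteSpace H]
    (A W : H →L[ℂ] H) (hA : IsSelfAdjoint A) (hW : IsSelfAdjoint W)
    (f E : ℝ → ℝ) (ψ : ℝ → H) (s : ℝ) (f' E' : ℝ) (v : H)
    (heig : ∀ t, A (ψ t) + f t • W (ψ t) = E t • ψ t)
    (hnorm : ∀ t, ‖ψ t‖ = 1)
    (hf : HasDerivAt f f' s) (hE : HasDerivAt E E' s) (hψ : HasDerivAt ψ v s) :
    E' = f' * (inner ℂ (ψ s) (W (ψ s)) : ℂ).re := by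
  have hsmul : ∀ (r : ℝ) (x : H), r • x = (r : ℂ) • x := fun r x =>
    RCLike.real_smul_eq_coe_smul (K := ℂ) r x
  have heig' : ∀ t, A (ψ t) + (f t : ℂ) • W (ψ t) = (E t : ℂ) • ψ t := by
    intro t; rw [← hsmul, ← hsmul]; exact heig t
  have hAv : HasDerivAt (fun t => A (ψ t)) (A v) s :=
    (A.restrictScalars ℝ).hasFDerivAt.comp_hasDerivAt s hψ
  have hWv : HasDerivAt (fun t => W (ψ t)) (W v) s :=
    (W.restrictScalars ℝ).hasFDerivAt.comp_hasDerivAt s hψ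
  -- the norm condition: ⟪ψ t, ψ t⟫ is constant 1
  have hone : ∀ t, (inner ℂ (ψ t) (ψ t) : ℂ) = 1 := by
    intro t
    rw [inner_self_eq_norm_sq_to_K, hnorm t]
    norm_num
  have hderiv0 : (inner ℂ (ψ s) v + inner ℂ v (ψ s) : ℂ) = 0 := by
    have h1 : HasDerivAt (fun t => (inner ℂ (ψ t) (ψ t) : ℂ))
        (inner ℂ (ψ s) v + inner ℂ v (ψ s)) s := hψ.inner ℂ hψ
    have h2 : HasDerivAt (fun t => (inner ℂ (ψ t) (ψ t) : ℂ)) 0 s := by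
      have : HasDerivAt (fun _ : ℝ => (1 : ℂ)) 0 s := hasDerivAt_const s 1
      exact this.congr_of_eventuallyEq (Filter.Eventually.of_forall fun t => hone t)
    exact h1.unique h2
  have hre0' : (inner ℂ v (ψ s) : ℂ).re = 0 := by
    have := congrArg Complex.re hderiv0
    simp only [Complex.add_re, Complex.zero_re] at this
    rw [← inner_conj_symm (ψ s) v] at this
    simp only [Complex.conj_re] at this
    linarith
  have hre0 : (inner ℂ (ψ s) v : ℂ).re = 0 := by
    rw [show ((inner ℂ (ψ s) v : ℂ)).re = ((inner ℂ v (ψ s) : ℂ)).re from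
      inner_re_symm (𝕜 := ℂ) _ _]
    exact hre0'
  -- G t = re⟪ψ t, A ψ t⟫ + f t * re⟪ψ t, W ψ t⟫ equals E t
  have hGE : ∀ t, (inner ℂ (ψ t) (A (ψ t)) : ℂ).re
      + f t * (inner ℂ (ψ t) (W (ψ t)) : ℂ).re = E t := by
    intro t
    have h : (inner ℂ (ψ t) (A (ψ t)) : ℂ) + (f t : ℂ) * inner ℂ (ψ t) (W (ψ t))
        = (E t : ℂ) := by
      rw [← inner_smul_right, ← inner_add_right, heig' t, inner_smul_right, hone t, mul_one]
    have := congrArg Complex.re h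
    simpa [Complex.add_re, Complex.mul_re, Complex.ofReal_re, Complex.ofReal_im] using this
  -- derivatives of the real parts
  have hcA : HasDerivAt (fun t => (inner ℂ (ψ t) (A (ψ t)) : ℂ).re)
      ((inner ℂ (ψ s) (A v) + inner ℂ v (A (ψ s)) : ℂ).re) s :=
    Complex.reCLM.hasFDerivAt.comp_hasDerivAt s (hψ.inner ℂ hAv)
  have hcW : HasDerivAt (fun t => (inner ℂ (ψ t) (W (ψ t)) : ℂ).re)
      ((inner ℂ (ψ s) (W v) + inner ℂ v (W (ψ s)) : ℂ).re) s :=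
    Complex.reCLM.hasFDerivAt.comp_hasDerivAt s (hψ.inner ℂ hWv)
  have hG : HasDerivAt E
      ((inner ℂ (ψ s) (A v) + inner ℂ v (A (ψ s)) : ℂ).re
        + (f' * (inner ℂ (ψ s) (W (ψ s)) : ℂ).re
          + f s * (inner ℂ (ψ s) (W v) + inner ℂ v (W (ψ s)) : ℂ).re)) s := by
    have := hcA.add (hf.mul hcW)
    exact this.congr_of_eventuallyEq (Filter.Eventually.of_forall fun t => (hGE t).symm)
  have hEq := hE.unique hG
  -- now simplify the cross terms to zero
  have h1 : (inner ℂ (A (ψ s)) v : ℂ) + (f s : ℂ) * inner ℂ (W (ψ s)) v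
      = (E s : ℂ) * inner ℂ (ψ s) v := by
    rw [show (f s : ℂ) * (inner ℂ (W (ψ s)) v : ℂ) = inner ℂ ((f s : ℂ) • W (ψ s)) v by
        rw [inner_smul_left, Complex.conj_ofReal],
      ← inner_add_left, heig' s, inner_smul_left, Complex.conj_ofReal]
  have h2 : (inner ℂ v (A (ψ s)) : ℂ) + (f s : ℂ) * inner ℂ v (W (ψ s))
      = (E s : ℂ) * inner ℂ v (ψ s) := by
    rw [← inner_smul_right, ← inner_add_right, heig' s, inner_smul_right]
  have hr1 := congrArg Complex.re h1
  have hr2 := congrArg Complex.re h2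
  simp only [Complex.add_re, Complex.mul_re, Complex.ofReal_re, Complex.ofReal_im,
    zero_mul, sub_zero] at hr1 hr2
  rw [hre0, mul_zero] at hr1
  rw [hre0', mul_zero] at hr2
  have hsA : ((inner ℂ (A (ψ s)) v : ℂ)).re = ((inner ℂ (ψ s) (A v) : ℂ)).re :=
    congrArg Complex.re (hA.isSymmetric (ψ s) v)
  have hsW : ((inner ℂ (W (ψ s)) v : ℂ)).re = ((inner ℂ (ψ s) (W v) : ℂ)).re :=
    congrArg Complex.re (hW.isSymmetric (ψ s) v)
  rw [hsA, hsW] at hr1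
  rw [hEq]
  simp only [Complex.add_re]
  linarith
end

section
/- Let H be a complex Hilbert space, A, W : H →L[ℂ] H self-adjoint continuous linear operators, f, E : ℝ → ℝ, ψ : ℝ → H, and s ∈ ℝ. Assume A(ψ t) + f(t)•W(ψ t) = E(t)•ψ(t) for all t, ‖ψ(t)‖ = 1 for all t, and that at s: f has derivative f', E has derivative E', and ψ has derivative v. Let φ ∈ H and μ ∈ ℝ satisfy A(φ) + f(s)•W(φ) = μ•φ with μ ≠ E(s). Then (E(s) − μ)·⟪φ, v⟫ = f'·⟪φ, W(ψ s)⟫; that is, for q ≠ l, (E_q − E_l)⟨E_l|∂_s|E_q⟩ = f'(s)⟨E_l|W|E_q⟩. -/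
/-- The off-diagonal components of the spectral flow:
`(E_q − E_l)⟨E_l|∂ₛ|E_q⟩ = f'(s)⟨E_l|W|E_q⟩` for `E_l ≠ E_q`. -/
theorem stmt7 {H : Type*} [NormedAddCommGroup H] [InnerProductSpace ℂ H] [CompleteSpace H]
    (A W : H →L[ℂ] H) (hA : IsSelfAdjoint A) (hW : IsSelfAdjoint W)
    (f E : ℝ → ℝ) (ψ : ℝ → H) (s : ℝ) (f' E' : ℝ) (v : H)
    (heig : ∀ t, A (ψ t) + f t • W (ψ t) = E t • ψ t)
    (hnorm : ∀ t, ‖ψ t‖ = 1)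
    (hf : HasDerivAt f f' s) (hE : HasDerivAt E E' s) (hψ : HasDerivAt ψ v s)
    (φ : H) (μ : ℝ) (hφ : A φ + f s • W φ = μ • φ) (hμ : μ ≠ E s) :
    ((E s - μ : ℝ) : ℂ) * (inner ℂ φ v : ℂ) = (f' : ℂ) * (inner ℂ φ (W (ψ s)) : ℂ) := by
  have hco : (RCLike.ofReal : ℝ → ℂ) = Complex.ofReal := rfl
  have hAsym : ∀ x y : H, (inner ℂ (A x) y : ℂ) = inner ℂ x (A y) := fun x y => hA.isSymmetric x y
  have hWsym : ∀ x y : H, (inner ℂ (W x) y : ℂ) = inner ℂ x (W y) := fun x y => hW.isSymmetric x y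
  have hAψ : HasDerivAt (fun t => A (ψ t)) (A v) s := by
    simpa [Function.comp_def] using ((A.restrictScalars ℝ).hasFDerivAt.comp_hasDerivAt s hψ)
  have hWψ : HasDerivAt (fun t => W (ψ t)) (W v) s := by
    simpa [Function.comp_def] using ((W.restrictScalars ℝ).hasFDerivAt.comp_hasDerivAt s hψ)
  have h1 : HasDerivAt (fun t => A (ψ t) + f t • W (ψ t))
      (A v + (f s • W v + f' • W (ψ s))) s := hAψ.add (hf.smul hWψ)
  have h2 : HasDerivAt (fun t => E t • ψ t) (E s • v + E' • ψ s) s := hE.smul hψ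
  have h2' : HasDerivAt (fun t => A (ψ t) + f t • W (ψ t)) (E s • v + E' • ψ s) s := by
    simpa only [heig] using h2
  have key : A v + (f s • W v + f' • W (ψ s)) = E s • v + E' • ψ s := h1.unique h2'
  -- orthogonality: ⟪φ, ψ s⟫ = 0
  have hinner : (inner ℂ (A φ + f s • W φ) (ψ s) : ℂ) = inner ℂ φ (A (ψ s) + f s • W (ψ s)) := by
    simp only [inner_add_left, inner_add_right, RCLike.real_smul_eq_coe_smul (K := ℂ),
      inner_smul_left, inner_smul_right, RCLike.conj_ofReal, hAsym, hWsym, hco, Complex.conj_ofReal]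
  rw [hφ, heig s] at hinner
  simp only [RCLike.real_smul_eq_coe_smul (K := ℂ), inner_smul_left, inner_smul_right,
    RCLike.conj_ofReal, hco, Complex.conj_ofReal] at hinner
  have horth : (inner ℂ φ (ψ s) : ℂ) = 0 := by
    have h0 : ((μ : ℂ) - (E s : ℂ)) * inner ℂ φ (ψ s) = 0 := by linear_combination hinner
    rcases mul_eq_zero.mp h0 with h | h
    · exact absurd (by push_cast [sub_eq_zero] at h; exact_mod_cast h) hμ
    · exact h
  -- take inner product of key with φ
  have hkey := congrArg (fun x => (inner ℂ φ x : ℂ)) key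
  simp only [inner_add_right, RCLike.real_smul_eq_coe_smul (K := ℂ), inner_smul_right, hco] at hkey
  have hAv : (inner ℂ φ (A v) : ℂ) + (f s : ℂ) * inner ℂ φ (W v) = (μ : ℂ) * inner ℂ φ v := by
    have := congrArg (fun x => (inner ℂ x v : ℂ)) hφ
    simp only [inner_add_left, RCLike.real_smul_eq_coe_smul (K := ℂ), inner_smul_left,
      RCLike.conj_ofReal, hAsym, hWsym, hco, Complex.conj_ofReal] at this
    exact this
  rw [horth] at hkey
  push_cast
  linear_combination hAv - hkey
end

section
/- Let H be a complex Hilbert space, A, W : H →L[ℂ] H self-adjoint continuous linear operators, f, E : ℝ → ℝ, ψ : ℝ → H, and s ∈ ℝ. Assume A(ψ t) + f(t)•W(ψ t) = E(t)•ψ(t) for all t, and that at s: f has derivative f', E has derivative E', and ψ has derivative v with ⟪ψ(s), v⟫ = 0. Let (b_l)_{l ∈ ι} be a Hilbert basis of H consisting of eigenvectors: A(b_l) + f(s)•W(b_l) = μ_l•b_l for all l, with the eigenvalue function μ : ι → ℝ injective, and suppose ψ(s) = b_q for some index q. Then v = ∑'_{l} c_l • b_l, where c_q = 0 and c_l = (f'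 / (μ_q − μ_l)) · ⟪b_l, W(ψ s)⟫ for l ≠ q; that is, ∂_s|E_q⟩ = f'(s) ∑_{l ≠ q} (⟨E_l|W|E_q⟩ / (E_q − E_l)) |E_l⟩. -/
/-- Expansion of `∂ₛ|E_q⟩` in the instantaneous eigenbasis:
`∂ₛ|E_q⟩ = f'(s) ∑_{l ≠ q} (⟨E_l|W|E_q⟩ / (E_q − E_l)) |E_l⟩`. -/
theorem stmt8 {H : Type*} [NormedAddCommGroup H] [InnerProductSpace ℂ H] [CompleteSpace H]
    {ι : Type*} [DecidableEq ι] (A W : H →L[ℂ] H) (hA : IsSelfAdjoint A) (hW : IsSelfAdjoint W)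
    (f E : ℝ → ℝ) (ψ : ℝ → H) (s : ℝ) (f' E' : ℝ) (v : H)
    (heig : ∀ t, A (ψ t) + f t • W (ψ t) = E t • ψ t)
    (hf : HasDerivAt f f' s) (hE : HasDerivAt E E' s) (hψ : HasDerivAt ψ v s)
    (hgauge : (inner ℂ (ψ s) v : ℂ) = 0)
    (b : HilbertBasis ι ℂ H) (μ : ι → ℝ)
    (hb : ∀ l, A (b l) + f s • W (b l) = μ l • b l)
    (hμ : Function.Injective μ)
    (q : ι) (hq : ψ s = b q) :
    v = ∑' l : ι,
      (if l = q then (0 : ℂ)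
        else ((f' : ℂ) / ((μ q : ℂ) - (μ l : ℂ))) * (inner ℂ (b l) (W (ψ s)) : ℂ)) • b l := by
  classical
  have hAsym : (A : H →ₗ[ℂ] H).IsSymmetric :=
    ContinuousLinearMap.isSelfAdjoint_iff_isSymmetric.mp hA
  have hWsym : (W : H →ₗ[ℂ] H).IsSymmetric :=
    ContinuousLinearMap.isSelfAdjoint_iff_isSymmetric.mp hW
  -- derivative of both sides of the eigenvalue equation
  have hAψ : HasDerivAt (fun t => A (ψ t)) (A v) s := ((A.hasFDerivAt (x := ψ s)).restrictScalars ℝ).comp_hasDerivAt s hψ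
  have hWψ : HasDerivAt (fun t => W (ψ t)) (W v) s := ((W.hasFDerivAt (x := ψ s)).restrictScalars ℝ).comp_hasDerivAt s hψ
  have hL : HasDerivAt (fun t => A (ψ t) + f t • W (ψ t))
      (A v + (f s • W v + f' • W (ψ s))) s := hAψ.add (hf.smul hWψ)
  have hR : HasDerivAt (fun t => A (ψ t) + f t • W (ψ t)) (E s • v + E' • ψ s) s := by
    have h : (fun t => A (ψ t) + f t • W (ψ t)) = fun t => E t • ψ t := funext heig
    rw [h]; exact hE.smul hψ
  have key : A v + (f s • W v + f' • W (ψ s)) = E s • v + E' • ψ s := hL.unique hR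
  -- E s = μ q
  have hEs : E s = μ q := by
    have hbq : A (b q) + f s • W (b q) = E s • b q := by rw [← hq]; exact heig s
    have h0 : (E s - μ q) • (b q : H) = 0 := by
      rw [sub_smul, ← hbq, hb q, sub_self]
    have hne : (b q : H) ≠ 0 := b.orthonormal.ne_zero q
    rcases smul_eq_zero.mp h0 with h | h
    · linarith [sub_eq_zero.mp h]
    · exact absurd h hne
  have hon := orthonormal_iff_ite.mp b.orthonormal
  -- the coefficient computation
  have coeff : ∀ l : ι, (inner ℂ (b l) v : ℂ) =
      (if l = q then (0 : ℂ)
        else ((f' : ℂ) / ((μ q : ℂ) - (μ l : ℂ))) * (inner ℂ (b l) (W (ψ s)) : ℂ)) := by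
    intro l
    by_cases hl : l = q
    · subst hl
      rw [← hq, hgauge, if_pos rfl]
    · rw [if_neg hl, hq]
      have hAl : (inner ℂ (b l) (A v) : ℂ) = inner ℂ (A (b l)) v := (hAsym (b l) v).symm
      have hWl : (inner ℂ (b l) (W v) : ℂ) = inner ℂ (W (b l)) v := (hWsym (b l) v).symm
      have hlq : (inner ℂ (b l) (b q) : ℂ) = 0 := by rw [hon l q, if_neg hl]
      have h1 := congrArg (fun x => (inner ℂ (b l) x : ℂ)) key
      simp only [inner_add_right, ← Complex.coe_smul, inner_smul_right] at h1
      rw [hAl, hWl, hq, hlq, hEs] at h1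
      have h2 : (inner ℂ (A (b l)) v : ℂ) + (f s : ℂ) * inner ℂ (W (b l)) v
          = (μ l : ℂ) * inner ℂ (b l) v := by
        have h := congrArg (fun x => (inner ℂ x v : ℂ)) (hb l)
        simpa [inner_add_left, ← Complex.coe_smul, inner_smul_left, Complex.conj_ofReal, mul_comm]
          using h
      have h3 : (μ l : ℂ) * inner ℂ (b l) v + (f' : ℂ) * inner ℂ (b l) (W (b q))
          = (μ q : ℂ) * inner ℂ (b l) v := by
        rw [← h2]; linear_combination h1
      have hdenom : ((μ q : ℂ) - (μ l : ℂ)) ≠ 0 := by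
        intro h
        have h' : (μ q : ℝ) = μ l := by exact_mod_cast sub_eq_zero.mp h
        exact hl (hμ h'.symm)
      field_simp
      linear_combination -h3
  -- expand v in the Hilbert basis
  have hv : v = ∑' l : ι, (inner ℂ (b l) v : ℂ) • b l := by
    have h := (b.hasSum_repr v).tsum_eq
    simp_rw [b.repr_apply_apply] at h
    exact h.symm
  rw [hv]
  exact tsum_congr fun l => by rw [coeff l]
end
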